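/- Let A = (A_1, …, A_n) be an allocation of a finite set M among n agents with valuations v_1, …, v_n : 2^M → ℝ. Then A maximizes total welfare over all permutations of its bundles (i.e., ∑_i v_i(A_i) ≥ ∑_i v_i(A_{σ(i)}) for every permutation σ of [n]) if and only if the envy graph G_A contains no cycle of positive total weight. -/

import Mathlib

/-- The total weight of the closed walk (cycle) visiting the vertices of `l` in
order and returning to the start: the sum of `w` over consecutive pairs of `l`,
including the closing arc from the last vertex back to the first. -/
def cycleWeight {n : ℕ} (w : Fin n → Fin n → ℝ) (l : List (Fin n)) : ℝ :=
  ((l.zip (l.rotate 1)).map fun q => w q.1 q.2).sum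

lemma cycleWeight_eq_sum {n : ℕ} (w : Fin n → Fin n → ℝ) (hw : ∀ i, w i i = 0)
    (l : List (Fin n)) (hl : l.Nodup) :
    cycleWeight w l = ∑ i, w i (l.formPerm i) := by
  have hrot : l.rotate 1 = l.map l.formPerm := by
    apply List.ext_getElem
    · simp
    · intro i h1 h2
      rw [List.getElem_rotate, List.getElem_map, List.formPerm_apply_getElem _ hl]
  have hzip : l.zip (l.map l.formPerm) = l.map (fun x => (x, l.formPerm x)) := by
    simpa using List.zip_map' (f := id) (g := l.formPerm) (l := l)
  rw [cycleWeight, hrot, hzip, List.map_map]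
  have : ((fun q : Fin n × Fin n => w q.1 q.2) ∘ fun x => (x, l.formPerm x)) =
      fun x => w x (l.formPerm x) := rfl
  rw [this, ← List.sum_toFinset _ hl]
  refine Finset.sum_subset (Finset.subset_univ _) ?_
  intro x _ hx
  rw [List.formPerm_apply_of_notMem (by simpa using hx), hw]

/-- **Welfare maximization iff no positive-weight cycle in the envy graph.**
An allocation `A` maximizes total welfare over all permutations of its bundles
iff the envy graph, with arc weights `w i j = v i (A j) - v i (A i)`,
contains no (simple) cycle of positive total weight. -/
theorem welfare_maximizing_iff_no_positive_cycle
    {α : Type*} [Fintype α] [DecidableEq α] {n : ℕ}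
    (v : Fin n → Finset α → ℝ) (A : Fin n → Finset α)
    (hdisj : ∀ i j : Fin n, i ≠ j → Disjoint (A i) (A j))
    (hcover : ∀ x : α, ∃ i : Fin n, x ∈ A i) :
    (∀ σ : Equiv.Perm (Fin n), ∑ i, v i (A (σ i)) ≤ ∑ i, v i (A i)) ↔
      (∀ l : List (Fin n), l ≠ [] → l.Nodup →
        cycleWeight (fun i j => v i (A j) - v i (A i)) l ≤ 0) := by
  classical
  set w : Fin n → Fin n → ℝ := fun i j => v i (A j) - v i (A i) with hwdef
  have hw : ∀ i, w i i = 0 := fun i => sub_self _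
  have key : ∀ σ : Equiv.Perm (Fin n),
      (∑ i, v i (A (σ i)) ≤ ∑ i, v i (A i)) ↔ ∑ i, w i (σ i) ≤ 0 := by
    intro σ
    have : ∑ i, w i (σ i) = ∑ i, v i (A (σ i)) - ∑ i, v i (A i) := by
      rw [← Finset.sum_sub_distrib]
    rw [this]
    constructor <;> intro h <;> linarith
  constructor
  · intro h l hne hnd
    rw [cycleWeight_eq_sum w hw l hnd]
    exact (key l.formPerm).mp (h _)
  · intro h σ
    rw [key σ]
    induction σ using Equiv.Perm.cycle_induction_on with
    | base_one => simp [hw]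
    | base_cycles σ hσ =>
      obtain ⟨x, hx, -⟩ := id hσ
      have hxs : x ∈ σ.support := Equiv.Perm.mem_support.mpr hx
      have hform : (σ.toList x).formPerm = σ := by
        rw [Equiv.Perm.formPerm_toList, hσ.cycleOf_eq hx]
      have hne : σ.toList x ≠ [] := by
        have := Equiv.Perm.length_toList_pos_of_mem_support (p := σ) (x := x) hxs
        exact List.ne_nil_of_length_pos this
      have := h (σ.toList x) hne (Equiv.Perm.nodup_toList σ x)
      rwa [cycleWeight_eq_sum w hw _ (Equiv.Perm.nodup_toList σ x), hform] at this
    | induction_disjoint σ τ hdis hc hσ hτ =>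
      have : ∑ i, w i ((σ * τ) i) = ∑ i, w i (σ i) + ∑ i, w i (τ i) := by
        rw [← Finset.sum_add_distrib]
        refine Finset.sum_congr rfl fun i _ => ?_
        rcases eq_or_ne (τ i) i with h1 | h1
        · simp [Equiv.Perm.mul_apply, h1, hw]
        · have hσi : σ i = i := ((hdis i).resolve_right h1)
          have hτi : τ i ∈ τ.support :=
            Equiv.Perm.apply_mem_support.mpr (Equiv.Perm.mem_support.mpr h1)
          have hστ : σ (τ i) = τ i :=
            (hdis (τ i)).resolve_right (Equiv.Perm.mem_support.mp hτi)
          simp [Equiv.Perm.mul_apply, hστ, hσi, hw]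
      rw [this]
      linarith
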